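/- If r is odd, then the topologically generated group G = ⟨⟨a₁,…,a_r⟩⟩ contains no odometer. -/

import Mathlib

namespace BinTree

/-- Vertices of the infinite rooted binary tree: finite words over `{0,1}`. -/
abbrev Vertex : Type := List Bool

/-- A function on vertices is a tree automorphism function if it preserves lengths
(levels) and prefixes. -/
def IsTreeAutFun (f : Vertex → Vertex) : Prop :=
  (∀ v, (f v).length = v.length) ∧ ∀ v w : Vertex, (f (v ++ w)).take v.length = f v

/-- `Ω`: the automorphism group of the infinite rooted binary tree, realized as the
subgroup of permutations of the set of vertices preserving the tree structure. -/
def TreeAut : Subgroup (Equiv.Perm Vertex) where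
  carrier := {e | IsTreeAutFun ⇑e}
  one_mem' := ⟨fun _ => rfl, fun v w => by
    simpa using List.take_left (l₁ := v) (l₂ := w)⟩
  mul_mem' := by
    rintro a b ha hb
    obtain ⟨ha1, ha2⟩ := ha
    obtain ⟨hb1, hb2⟩ := hb
    refine ⟨fun v => ?_, fun v w => ?_⟩
    · simp [Equiv.Perm.mul_apply, ha1, hb1]
    · have hb' : b (v ++ w) = b v ++ (b (v ++ w)).drop v.length := by
        conv_lhs => rw [← List.take_append_drop v.length (b (v ++ w)), hb2]
      have hlen : (b v).length = v.length := hb1 v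
      calc ((a * b) (v ++ w)).take v.length
          = (a (b v ++ (b (v ++ w)).drop v.length)).take v.length := by
            rw [Equiv.Perm.mul_apply, ← hb']
        _ = a (b v) := by rw [← hlen]; exact ha2 _ _
        _ = (a * b) v := rfl
  inv_mem' := by
    intro a ha
    obtain ⟨ha1, ha2⟩ := ha
    show IsTreeAutFun ⇑a⁻¹
    have hlen : ∀ v : Vertex, (a⁻¹ v).length = v.length := by
      intro v
      have h := ha1 (a⁻¹ v)
      rw [show a (a⁻¹ v) = v from Equiv.apply_symm_apply a v] at h
      exact h.symm ▸ rfl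
    refine ⟨hlen, fun v w => ?_⟩
    have htl : ((a⁻¹ (v ++ w)).take v.length).length = v.length := by
      rw [List.length_take, hlen, List.length_append]
      omega
    have key : a ((a⁻¹ (v ++ w)).take v.length) = v := by
      have h2 := ha2 ((a⁻¹ (v ++ w)).take v.length) ((a⁻¹ (v ++ w)).drop v.length)
      rw [List.take_append_drop, htl, show a (a⁻¹ (v ++ w)) = v ++ w from Equiv.apply_symm_apply a _] at h2
      rw [← h2]
      simpa using List.take_left (l₁ := v) (l₂ := w)
    have h3 := congrArg (⇑a⁻¹) key
    rwa [show a⁻¹ (a ((a⁻¹ (v ++ w)).take v.length)) = (a⁻¹ (v ++ w)).take v.length from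
      Equiv.symm_apply_apply a _] at h3

/-- wreath recursion, forward map: `(g,h)σᵗ` -/
def wrFun (g h : Vertex → Vertex) (t : Bool) : Vertex → Vertex
  | [] => []
  | x :: v => (xor x t) :: (cond x (h v) (g v))

/-- wreath recursion, inverse map -/
def wrFunInv (g h : Vertex → Vertex) (t : Bool) : Vertex → Vertex
  | [] => []
  | y :: w => (xor y t) :: (cond (xor y t) (h w) (g w))

/-- `(g,h)σᵗ` as a permutation of the vertices. -/
def wrPerm (g h : Equiv.Perm Vertex) (t : Bool) : Equiv.Perm Vertex where
  toFun := wrFun ⇑g ⇑h t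
  invFun := wrFunInv ⇑g.symm ⇑h.symm t
  left_inv := by
    intro v
    cases v with
    | nil => rfl
    | cons x v => cases x <;> cases t <;> simp [wrFun, wrFunInv]
  right_inv := by
    intro v
    cases v with
    | nil => rfl
    | cons x v => cases x <;> cases t <;> simp [wrFun, wrFunInv]

/-- The element `(g,h)σᵗ` of `Ω`: acts on the first level by `σᵗ` (where `σ` is the
swap of the two level-one subtrees), with section `g` at the vertex `0` and section
`h` at the vertex `1`.  Thus `(γ₀,γ₁)τ` of the wreath recursion
`Ω ≃ (Ω × Ω) ⋊ S₂` is `wr γ₀ γ₁ t` (`t = true` iff `τ = σ`). -/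
def wr (g h : TreeAut) (t : Bool) : TreeAut :=
  ⟨wrPerm g.1 h.1 t, by
    have hg : IsTreeAutFun ⇑g.1 := g.2
    have hh : IsTreeAutFun ⇑h.1 := h.2
    constructor
    · intro v
      cases v with
      | nil => rfl
      | cons x v =>
        cases x <;> simp [wrPerm, wrFun, hg.1, hh.1]
    · intro v w
      cases v with
      | nil => simp [wrPerm, wrFun]
      | cons x v =>
        cases x <;> simp [wrPerm, wrFun, hg.2, hh.2]⟩

/-- Application of a tree automorphism to a vertex. -/
def ap (γ : TreeAut) (v : Vertex) : Vertex := γ.1 v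

/-- The permutation induced by `γ ∈ Ω` on level `n` of the tree. -/
def levelPerm (n : ℕ) (γ : TreeAut) : Equiv.Perm (List.Vector Bool n) where
  toFun v := ⟨γ.1 v.1, by
    have h : IsTreeAutFun ⇑γ.1 := γ.2
    rw [h.1 v.1]; exact v.2⟩
  invFun v := ⟨γ.1.symm v.1, by
    have h : IsTreeAutFun ⇑γ.1 := γ.2
    have h2 := h.1 (γ.1.symm v.1)
    rw [Equiv.apply_symm_apply] at h2
    exact h2.symm.trans v.2⟩
  left_inv v := Subtype.ext (Equiv.symm_apply_apply _ _)
  right_inv v := Subtype.ext (Equiv.apply_symm_apply _ _)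

/-- Restriction to level `n` as a group homomorphism. -/
def levelHom (n : ℕ) : TreeAut →* Equiv.Perm (List.Vector Bool n) where
  toFun := levelPerm n
  map_one' := Equiv.ext fun v => Subtype.ext rfl
  map_mul' := fun g h => Equiv.ext fun v => Subtype.ext rfl

/-- `sgn_n`: the sign of the permutation induced on level `n`. -/
def sgn (n : ℕ) (γ : TreeAut) : ℤˣ := Equiv.Perm.sign (levelPerm n γ)

/-- An odometer: acts as a single `2^n`-cycle on each level `n ≥ 1`. -/
def IsOdometer (γ : TreeAut) : Prop :=
  ∀ n : ℕ, 1 ≤ n → (levelPerm n γ).IsCycle ∧ (levelPerm n γ).support = Finset.univ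

/-- The profinite topology on `Ω`: the coarsest topology making all level
restrictions (to the discrete finite groups) continuous. -/
instance : TopologicalSpace TreeAut :=
  ⨅ n : ℕ, TopologicalSpace.induced (levelPerm n) ⊥

/-- A vertex `w` is in a stable cycle of `γ` of length `k`: its `γ`-orbit has exactly
`k` elements, and for every level `m` above the level of `w`, all level-`m` vertices
lying above this orbit are in one single `γ`-cycle (necessarily of length
`2^(m - n) * k`, which we record via the periodicity condition). -/
def InStableCycle (γ : TreeAut) (w : Vertex) (k : ℕ) : Prop :=
  0 < k ∧ ap (γ ^ k) w = w ∧ (∀ j : ℕ, 0 < j → j < k → ap (γ ^ j) w ≠ w) ∧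
  (∀ u : Vertex, w.length < u.length → (∃ i : ℕ, u.take w.length = ap (γ ^ i) w) →
    (ap (γ ^ (2 ^ (u.length - w.length) * k)) u = u ∧
      ∀ u' : Vertex, u'.length = u.length →
        (∃ i : ℕ, u'.take w.length = ap (γ ^ i) w) → ∃ j : ℕ, ap (γ ^ j) u = u'))

/-- Self-similar subgroup: closed under taking sections (here the section of `γ` at
the first-level vertex `x` is characterized by `(xv)γ = (x)γ ⬝ (v)γₓ`). -/
def SelfSimilar (H : Subgroup TreeAut) : Prop :=
  ∀ γ ∈ H, ∀ x : Bool, ∀ δ : TreeAut,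
    (∀ v : Vertex, ap γ (x :: v) = ap γ [x] ++ ap δ v) → δ ∈ H


open Equiv in
/-- Splitting a vector of length `n+1` into head and tail. -/
def headTail (n : ℕ) : List.Vector Bool (n + 1) ≃ Bool × List.Vector Bool n where
  toFun v := (v.head, v.tail)
  invFun p := p.1 ::ᵥ p.2
  left_inv v := v.cons_head_tail
  right_inv p := by cases p; simp

open Equiv in
/-- The permutation of `Bool × β` flipping the first coordinate. -/
def flipPerm (β : Type*) : Equiv.Perm (Bool × β) :=
  (Equiv.prodComm β Bool).permCongr (Equiv.prodCongrRight fun _ : β => Equiv.swap false true)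

@[simp] lemma flipPerm_apply {β : Type*} (p : Bool × β) : flipPerm β p = (!p.1, p.2) := by
  cases p with
  | mk x v => cases x <;> rfl

lemma sign_flipPerm {β : Type*} [Fintype β] [DecidableEq β] :
    Equiv.Perm.sign (flipPerm β) = (-1) ^ Fintype.card β := by
  rw [flipPerm, Equiv.Perm.sign_permCongr, Equiv.Perm.sign_prodCongrRight]
  simp [Equiv.Perm.sign_swap]

lemma sgn_zero (γ : TreeAut) : sgn 0 γ = 1 := by
  have h : levelPerm 0 γ = 1 := by
    apply Equiv.ext; intro v
    apply Subtype.ext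
    have h1 : ((levelPerm 0 γ) v).1.length = 0 := ((levelPerm 0 γ) v).2
    have h2 : (v : List.Vector Bool 0).1.length = 0 := v.2
    rw [List.length_eq_zero_iff] at h1 h2
    simp [h1, Equiv.Perm.one_apply, h2]
  rw [sgn, h, map_one]

lemma sgn_one (n : ℕ) : sgn n (1 : TreeAut) = 1 := by
  have h : levelPerm n (1 : TreeAut) = 1 := Equiv.ext fun v => Subtype.ext rfl
  rw [sgn, h, map_one]

lemma levelPerm_wr (g h : TreeAut) (t : Bool) (n : ℕ) :
    levelPerm (n + 1) (wr g h t) =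
      (headTail n).symm.permCongr
        ((Equiv.prodCongrRight fun x : Bool =>
            if x then levelPerm n h else levelPerm n g).trans
          (if t then flipPerm _ else 1)) := by
  apply Equiv.ext; intro v
  apply Subtype.ext
  obtain ⟨l, hl⟩ := v
  match l, hl with
  | x :: l', hl =>
    cases x <;> cases t <;> rfl
lemma sgn_wr (g h : TreeAut) (t : Bool) (n : ℕ) :
    sgn (n + 1) (wr g h t) = sgn n g * sgn n h * (if t then (-1) ^ (2 ^ n) else 1) := by
  rw [sgn, levelPerm_wr, Equiv.Perm.sign_permCongr]
  have htr : ∀ p q : Equiv.Perm (Bool × List.Vector Bool n), p.trans q = q * p :=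
    fun _ _ => rfl
  rw [htr, map_mul, Equiv.Perm.sign_prodCongrRight, Fintype.prod_bool]
  cases t <;>
    simp [sign_flipPerm, card_vector, sgn, mul_comm, mul_left_comm]
lemma cast_inj_Icc (r x y : ℕ) (hx1 : 1 ≤ x) (hxr : x ≤ r) (hy1 : 1 ≤ y) (hyr : y ≤ r) :
    (x : ZMod r) = (y : ZMod r) ↔ x = y := by
  rw [ZMod.natCast_eq_natCast_iff]
  show x % r = y % r ↔ x = y
  have hm : ∀ z : ℕ, 1 ≤ z → z ≤ r → (z = r ∧ z % r = 0) ∨ (z < r ∧ z % r = z) := by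
    intro z h1 h2
    rcases eq_or_ne z r with h | h
    · exact Or.inl ⟨h, by rw [h, Nat.mod_self]⟩
    · exact Or.inr ⟨by omega, Nat.mod_eq_of_lt (by omega)⟩
  constructor
  · intro h
    rcases hm x hx1 hxr with ⟨e1, e2⟩ | ⟨e1, e2⟩ <;>
      rcases hm y hy1 hyr with ⟨f1, f2⟩ | ⟨f1, f2⟩ <;> omega
  · rintro rfl; rfl

lemma sgn_rec (r s : ℕ) (hr : 3 ≤ r) (hs1 : 1 < s) (hsr : s ≤ r)
    (a : ZMod r → TreeAut)
    (ha1 : a 1 = wr (a (r : ZMod r)) 1 true)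
    (hmid : ∀ i : ℕ, 2 ≤ i → i ≤ s - 1 → a (i : ZMod r) = wr 1 (a ((i - 1 : ℕ) : ZMod r)) false)
    (has : a (s : ZMod r) = wr 1 (a ((s - 1 : ℕ) : ZMod r)) true)
    (hhi : ∀ i : ℕ, s + 1 ≤ i → i ≤ r → a (i : ZMod r) = wr (a ((i - 1 : ℕ) : ZMod r)) 1 false)
    (j : ZMod r) (n : ℕ) :
    sgn (n + 1) (a j) =
      sgn n (a (j - 1)) *
        (if j = 1 ∨ j = (s : ZMod r) then (-1) ^ (2 ^ n) else 1) := by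
  haveI : NeZero r := ⟨by omega⟩
  obtain ⟨i, hi1, hir, rfl⟩ : ∃ i : ℕ, 1 ≤ i ∧ i ≤ r ∧ (i : ZMod r) = j := by
    have hvlt := ZMod.val_lt j
    have hvc : ((j.val : ℕ) : ZMod r) = j := ZMod.natCast_rightInverse j
    by_cases h0 : j.val = 0
    · refine ⟨r, by omega, le_refl r, ?_⟩
      rw [ZMod.natCast_self, ← hvc, h0, Nat.cast_zero]
    · exact ⟨j.val, by omega, by omega, hvc⟩
  have hone : ((1 : ℕ) : ZMod r) = (1 : ZMod r) := Nat.cast_one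
  rcases eq_or_ne i 1 with rfl | hne1
  · rw [hone, ha1, sgn_wr, sgn_one]
    simp [sub_self, ZMod.natCast_self]
  · rcases eq_or_ne i s with rfl | hnes
    · rw [has, sgn_wr, sgn_one, one_mul]
      have hc : ((i : ℕ) : ZMod r) = 1 ∨ ((i : ℕ) : ZMod r) = ((i : ℕ) : ZMod r) :=
        Or.inr rfl
      rw [if_pos hc]
      have hsub : ((i - 1 : ℕ) : ZMod r) = ((i : ℕ) : ZMod r) - 1 := by
        push_cast [Nat.cast_sub (by omega : 1 ≤ i)]; ring
      rw [hsub]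
      simp
    · have hcast : ((i - 1 : ℕ) : ZMod r) = (i : ZMod r) - 1 := by
        push_cast [Nat.cast_sub (by omega : 1 ≤ i)]; ring
      have hcnot : ¬((i : ZMod r) = 1 ∨ (i : ZMod r) = (s : ZMod r)) := by
        rintro (h | h)
        · rw [← hone, cast_inj_Icc r i 1 hi1 hir (by omega) (by omega)] at h
          exact hne1 h
        · rw [cast_inj_Icc r i s hi1 hir (by omega) hsr] at h
          exact hnes h
      rw [if_neg hcnot, mul_one]
      rcases le_or_gt i (s - 1) with hle | hgt
      · rw [hmid i (by omega) hle, sgn_wr, sgn_one, one_mul, hcast]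
        simp
      · rw [hhi i (by omega) hir, sgn_wr, sgn_one, hcast]
        simp
lemma sgn_closed (r s : ℕ) (hr : 3 ≤ r) (hs1 : 1 < s) (hsr : s ≤ r)
    (a : ZMod r → TreeAut)
    (ha1 : a 1 = wr (a (r : ZMod r)) 1 true)
    (hmid : ∀ i : ℕ, 2 ≤ i → i ≤ s - 1 → a (i : ZMod r) = wr 1 (a ((i - 1 : ℕ) : ZMod r)) false)
    (has : a (s : ZMod r) = wr 1 (a ((s - 1 : ℕ) : ZMod r)) true)
    (hhi : ∀ i : ℕ, s + 1 ≤ i → i ≤ r → a (i : ZMod r) = wr (a ((i - 1 : ℕ) : ZMod r)) 1 false) :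
    ∀ n : ℕ, ∀ j : ZMod r,
      sgn (n + 1) (a j) =
        if j = (n : ZMod r) + 1 ∨ j = (n : ZMod r) + (s : ZMod r) then -1 else 1 := by
  intro n
  induction n with
  | zero =>
    intro j
    rw [sgn_rec r s hr hs1 hsr a ha1 hmid has hhi j 0, sgn_zero, one_mul]
    norm_num
  | succ n ih =>
    intro j
    rw [sgn_rec r s hr hs1 hsr a ha1 hmid has hhi j (n + 1), ih (j - 1)]
    have heven : ((-1 : ℤˣ) ^ (2 ^ (n + 1)) = 1) := Even.neg_one_pow ⟨2 ^ n, by ring⟩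
    rw [heven, ite_self, mul_one]
    have h1 : (j - 1 = (n : ZMod r) + 1) ↔ (j = ((n + 1 : ℕ) : ZMod r) + 1) := by
      rw [sub_eq_iff_eq_add]; push_cast; constructor <;> intro h <;> [rw [h]; rw [h]] <;> ring
    have h2 : (j - 1 = (n : ZMod r) + (s : ZMod r)) ↔
        (j = ((n + 1 : ℕ) : ZMod r) + (s : ZMod r)) := by
      rw [sub_eq_iff_eq_add]; push_cast; constructor <;> intro h <;> [rw [h]; rw [h]] <;> ring
    rw [if_congr (or_congr h1 h2) rfl rfl]

lemma prod_sgn (r s : ℕ) (hr : 3 ≤ r) (hs1 : 1 < s) (hsr : s ≤ r)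
    (a : ZMod r → TreeAut)
    (ha1 : a 1 = wr (a (r : ZMod r)) 1 true)
    (hmid : ∀ i : ℕ, 2 ≤ i → i ≤ s - 1 → a (i : ZMod r) = wr 1 (a ((i - 1 : ℕ) : ZMod r)) false)
    (has : a (s : ZMod r) = wr 1 (a ((s - 1 : ℕ) : ZMod r)) true)
    (hhi : ∀ i : ℕ, s + 1 ≤ i → i ≤ r → a (i : ZMod r) = wr (a ((i - 1 : ℕ) : ZMod r)) 1 false)
    (j : ZMod r) :
    ∏ n ∈ Finset.range r, sgn (n + 1) (a j) = 1 := by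
  haveI : NeZero r := ⟨by omega⟩
  have step1 : ∏ n ∈ Finset.range r, sgn (n + 1) (a j) =
      ∏ n ∈ Finset.range r,
        (if j = (n : ZMod r) + 1 ∨ j = (n : ZMod r) + (s : ZMod r) then (-1 : ℤˣ) else 1) :=
    Finset.prod_congr rfl fun n _ => sgn_closed r s hr hs1 hsr a ha1 hmid has hhi n j
  rw [step1]
  have step2 : ∏ n ∈ Finset.range r,
        (if j = (n : ZMod r) + 1 ∨ j = (n : ZMod r) + (s : ZMod r) then (-1 : ℤˣ) else 1) =
      ∏ x : ZMod r, (if j = x + 1 ∨ j = x + (s : ZMod r) then (-1 : ℤˣ) else 1) := by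
    refine Finset.prod_nbij' (fun n => (n : ZMod r)) (fun x => x.val) ?_ ?_ ?_ ?_ ?_
    · intro n _; exact Finset.mem_univ _
    · intro x _; exact Finset.mem_range.mpr (ZMod.val_lt x)
    · intro n hn; exact ZMod.val_cast_of_lt (Finset.mem_range.mp hn)
    · intro x _; exact ZMod.natCast_rightInverse x
    · intro n _; rfl
  rw [step2]
  have hcond : ∀ x : ZMod r,
      (j = x + 1 ∨ j = x + (s : ZMod r)) ↔ x ∈ ({j - 1, j - (s : ZMod r)} : Finset (ZMod r)) := by
    intro x
    simp only [Finset.mem_insert, Finset.mem_singleton, eq_sub_iff_add_eq]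
    exact or_congr eq_comm eq_comm
  have step3 : ∏ x : ZMod r, (if j = x + 1 ∨ j = x + (s : ZMod r) then (-1 : ℤˣ) else 1) =
      ∏ x : ZMod r,
        (if x ∈ ({j - 1, j - (s : ZMod r)} : Finset (ZMod r)) then (-1 : ℤˣ) else 1) :=
    Finset.prod_congr rfl fun x _ => if_congr (hcond x) rfl rfl
  rw [step3, Finset.prod_ite_mem, Finset.univ_inter, Finset.prod_const]
  have hne : j - 1 ≠ j - (s : ZMod r) := by
    intro h
    rw [sub_right_inj] at h
    rw [show (1 : ZMod r) = ((1 : ℕ) : ZMod r) from (Nat.cast_one).symm,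
      cast_inj_Icc r 1 s (by omega) (by omega) (by omega) hsr] at h
    omega
  rw [Finset.card_pair hne]
  norm_num
lemma isOpen_levelSet (n : ℕ) (q : Equiv.Perm (List.Vector Bool n)) :
    IsOpen {δ : TreeAut | levelPerm n δ = q} := by
  have hle : (inferInstance : TopologicalSpace TreeAut) ≤
      TopologicalSpace.induced (levelPerm n) ⊥ := iInf_le _ n
  have hopen : @IsOpen _ (TopologicalSpace.induced (levelPerm n) ⊥)
      {δ : TreeAut | levelPerm n δ = q} := by
    exact (@isOpen_induced_iff _ _ ⊥ _ _).mpr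
      ⟨{q}, @isOpen_discrete _ ⊥ (discreteTopology_bot _) _, rfl⟩
  exact hle _ hopen

lemma isOpen_prodSgn (r : ℕ) (c : ℤˣ) :
    IsOpen {δ : TreeAut | ∏ n ∈ Finset.range r, sgn (n + 1) δ = c} := by
  have key : {δ : TreeAut | ∏ n ∈ Finset.range r, sgn (n + 1) δ = c} =
      ⋃ p ∈ {p : (k : Fin r) → Equiv.Perm (List.Vector Bool (k + 1)) |
          ∏ k : Fin r, Equiv.Perm.sign (p k) = c},
        ⋂ k : Fin r, {δ : TreeAut | levelPerm ((k : ℕ) + 1) δ = p k} := by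
    ext δ
    simp only [Set.mem_iUnion, Set.mem_iInter, Set.mem_setOf_eq]
    constructor
    · intro hδ
      refine ⟨fun k => levelPerm ((k : ℕ) + 1) δ, ?_, fun k => rfl⟩
      rw [← hδ, ← Fin.prod_univ_eq_prod_range (fun n => sgn (n + 1) δ) r]
      rfl
    · rintro ⟨p, hp, hpd⟩
      rw [← Fin.prod_univ_eq_prod_range (fun n => sgn (n + 1) δ) r, ← hp]
      exact Finset.prod_congr rfl fun k _ => by rw [sgn, hpd k]
  rw [key]
  exact isOpen_biUnion fun p _ =>
    isOpen_iInter_of_finite fun k => isOpen_levelSet _ _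

lemma isClosed_prodSgn_one (r : ℕ) :
    IsClosed {δ : TreeAut | ∏ n ∈ Finset.range r, sgn (n + 1) δ = 1} := by
  rw [← isOpen_compl_iff]
  have : {δ : TreeAut | ∏ n ∈ Finset.range r, sgn (n + 1) δ = 1}ᶜ =
      {δ : TreeAut | ∏ n ∈ Finset.range r, sgn (n + 1) δ = -1} := by
    ext δ
    simp only [Set.mem_compl_iff, Set.mem_setOf_eq]
    rcases Int.units_eq_one_or (∏ n ∈ Finset.range r, sgn (n + 1) δ) with h | h <;>
      simp [h]
  rw [this]
  exact isOpen_prodSgn r (-1)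
/-- if r is odd then G = ⟨⟨a₁,…,a_r⟩⟩ contains no odometer. -/
theorem no_odometer_of_odd
    (r s : ℕ) (hr : 3 ≤ r) (hs1 : 1 < s) (hsr : s ≤ r)
    (a : ZMod r → TreeAut)
    (ha1 : a 1 = wr (a (r : ZMod r)) 1 true)
    (hmid : ∀ i : ℕ, 2 ≤ i → i ≤ s - 1 → a (i : ZMod r) = wr 1 (a ((i - 1 : ℕ) : ZMod r)) false)
    (has : a (s : ZMod r) = wr 1 (a ((s - 1 : ℕ) : ZMod r)) true)
    (hhi : ∀ i : ℕ, s + 1 ≤ i → i ≤ r → a (i : ZMod r) = wr (a ((i - 1 : ℕ) : ZMod r)) 1 false)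
    (hodd : Odd r) :
    ∀ γ ∈ closure ((Subgroup.closure (Set.range a) : Subgroup TreeAut) : Set TreeAut),
      ¬ IsOdometer γ := by
  intro γ hγ hod
  -- the product-of-signs homomorphism
  set F : TreeAut →* ℤˣ :=
    ∏ n ∈ Finset.range r, ((Equiv.Perm.sign).comp (levelHom (n + 1))) with hF
  have hFapp : ∀ δ : TreeAut, F δ = ∏ n ∈ Finset.range r, sgn (n + 1) δ := by
    intro δ
    rw [hF, MonoidHom.finset_prod_apply]
    rfl
  -- the generators lie in the kernel of F
  have hker : (Subgroup.closure (Set.range a) : Subgroup TreeAut) ≤ F.ker := by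
    rw [Subgroup.closure_le]
    rintro - ⟨j, rfl⟩
    show F (a j) = 1
    rw [hFapp]
    exact prod_sgn r s hr hs1 hsr a ha1 hmid has hhi j
  -- hence so does γ, by closedness
  have hγ1 : ∏ n ∈ Finset.range r, sgn (n + 1) γ = 1 := by
    have hsub : ((Subgroup.closure (Set.range a) : Subgroup TreeAut) : Set TreeAut) ⊆
        {δ : TreeAut | ∏ n ∈ Finset.range r, sgn (n + 1) δ = 1} := by
      intro δ hδ
      have : F δ = 1 := hker hδ
      rw [hFapp] at this
      exact this
    exact closure_minimal hsub (isClosed_prodSgn_one r) hγ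
  -- but an odometer has sign -1 at every level
  have hsgn : ∀ n : ℕ, sgn (n + 1) γ = -1 := by
    intro n
    obtain ⟨hc, hsupp⟩ := hod (n + 1) (by omega)
    have hsign := hc.sign
    rw [hsupp, Finset.card_univ] at hsign
    have hcard : Fintype.card (List.Vector Bool (n + 1)) = 2 ^ (n + 1) := by
      rw [card_vector, Fintype.card_bool]
    rw [hcard] at hsign
    have heven : ((-1 : ℤˣ) ^ (2 ^ (n + 1)) = 1) := Even.neg_one_pow ⟨2 ^ n, by ring⟩
    rw [sgn, hsign, heven]
  rw [Finset.prod_congr rfl fun n _ => hsgn n, Finset.prod_const, Finset.card_range,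
    Odd.neg_one_pow hodd] at hγ1
  exact absurd hγ1 (by decide)

end BinTree
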